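/- The double-well potential Ṽ(z) = −az² + bz⁴ with a, b > 0 satisfies Ṽ'(y) − Ṽ'(x) ≥ 2Ṽ'((y−x)/2) for all x < y; i.e. Ṽ' is a modulus of convexity for Ṽ. -/

import Mathlib

lemma dw_deriv (a b t : ℝ) :
    deriv (fun z => -a * z ^ 2 + b * z ^ 4) t = -2 * a * t + 4 * b * t ^ 3 := by
  have h : HasDerivAt (fun z : ℝ => -a * z ^ 2 + b * z ^ 4)
      (-2 * a * t + 4 * b * t ^ 3) t := by
    have h1 : HasDerivAt (fun z : ℝ => -a * z ^ 2) (-a * (2 * t ^ 1)) t :=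
      (hasDerivAt_pow 2 t).const_mul (-a)
    have h2 : HasDerivAt (fun z : ℝ => b * z ^ 4) (b * (4 * t ^ 3)) t :=
      (hasDerivAt_pow 4 t).const_mul b
    exact (h1.add h2).congr_deriv (by ring)
  exact h.deriv

/-- The double-well potential `Ṽ(z) = −az² + bz⁴` with `a, b > 0`
satisfies `Ṽ'(y) − Ṽ'(x) ≥ 2Ṽ'((y−x)/2)` for all `x < y`; i.e. `Ṽ'` is a modulus of
convexity for `Ṽ`. -/
theorem stmt_7 (a b : ℝ) (ha : 0 < a) (hb : 0 < b) :
    ∀ x y : ℝ, x < y →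
      deriv (fun z => -a * z ^ 2 + b * z ^ 4) y
          - deriv (fun z => -a * z ^ 2 + b * z ^ 4) x
        ≥ 2 * deriv (fun z => -a * z ^ 2 + b * z ^ 4) ((y - x) / 2) := by
  intro x y hxy
  rw [dw_deriv, dw_deriv, dw_deriv]
  nlinarith [mul_nonneg hb.le (sq_nonneg (x + y)), sq_nonneg (y - x)]
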